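/- For every real parameter η, there exists a probability density f ∈ P(S²) with finite free energy F(f,η) < +∞ if and only if η < 2/3. -/

import Mathlib

/-
Common setting for the formalisation of
"An analysis of equilibria in dense nematic liquid crystals" (J. M. Taylor).

* `V3` is ℝ³ (as a Euclidean space), `sph` is the unit sphere S²,
  and `μS` is the 2-dimensional Hausdorff (surface) measure restricted to S².
* `IsProb f` says `f ∈ P(S²)`.
* `FE f η` is the free energy `F(f,η) ∈ ℝ ∪ {+∞}` (realised as `EReal`),
  with the conventions `0 ln 0 = 0`, `0 ⬝ (+∞) = 0` and `-ln x = +∞` for `x ≤ 0`: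
  the value is the real integral whenever the argument of the logarithm is a.e.
  positive on `{f ≠ 0}` and the integrand is integrable, and `+∞` otherwise.
-/

open MeasureTheory Matrix Filter
open scoped ENNReal Topology Classical

noncomputable section

abbrev V3 : Type := EuclideanSpace ℝ (Fin 3)

/-- The unit sphere S² in ℝ³. -/
def sph : Set V3 := Metric.sphere (0 : V3) 1

/-- The 2-dimensional Hausdorff (surface) measure on S². -/
def μS : Measure V3 := (μH[2]).restrict sph

abbrev Mat3 : Type := Matrix (Fin 3) (Fin 3) ℝ

/-- Membership in Sym₀(3): real symmetric traceless 3×3 matrices. -/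
def Sym0 (Q : Mat3) : Prop := Q.IsSymm ∧ Q.trace = 0

/-- The Frobenius inner product `A·B = trace (A*B)` (on symmetric matrices). -/
def mdot (A B : Mat3) : ℝ := (A * B).trace

/-- The quadratic form `p ↦ Qp·p`. -/
def qf (Q : Mat3) (p : V3) : ℝ := ∑ i, ∑ j, Q i j * p i * p j

/-- The smallest eigenvalue of a symmetric matrix, via Rayleigh quotients on S². -/
def vmin (Q : Mat3) : ℝ := ⨅ p : sph, qf Q (p : V3)

/-- `f ∈ P(S²)`. -/
def IsProb (f : V3 → ℝ) : Prop :=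
  Integrable f μS ∧ (∀ᵐ p ∂μS, 0 ≤ f p) ∧ ∫ p, f p ∂μS = 1

/-- The interaction term `p ↦ ∫_{S²} ((p·q)² − 1/3) f(q) dq`. -/
def Kf (f : V3 → ℝ) (p : V3) : ℝ :=
  ∫ q, ((∑ i, p i * q i) ^ 2 - 1 / 3) * f q ∂μS

/-- The free energy `F(f,η) ∈ ℝ ∪ {+∞}`. -/
def FE (f : V3 → ℝ) (η : ℝ) : EReal :=
  if (∀ᵐ p ∂μS, f p ≠ 0 → η < Kf f p) ∧
      Integrable (fun p => f p * Real.log (f p) - f p * Real.log (Kf f p - η)) μS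
  then ((∫ p, f p * Real.log (f p) - f p * Real.log (Kf f p - η) ∂μS : ℝ) : EReal)
  else ⊤

/-- The Q-tensor `Q(f) = ∫_{S²} (p⊗p − (1/3)I) f(p) dp`. -/
def Qten (f : V3 → ℝ) : Mat3 :=
  Matrix.of fun i j => ∫ p, f p * (p i * p j - if i = j then (1 : ℝ) / 3 else 0) ∂μS

/-- The macroscopic energy `J(Q,η) = inf_{f ∈ A(Q)} F(f,η)` (`= +∞` when `A(Q) = ∅`). -/
def Jfun (Q : Mat3) (η : ℝ) : EReal :=
  sInf {y : EReal | ∃ f : V3 → ℝ, IsProb f ∧ Qten f = Q ∧ FE f η = y}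

/-- The dual objective `D(Q,λ,η) = λ·Q − ln ∫_{S²} exp(λp·p) max(Qp·p − η, 0) dp`. -/
def Dob (Q lam : Mat3) (η : ℝ) : ℝ :=
  mdot lam Q - Real.log (∫ p, Real.exp (qf lam p) * max (qf Q p - η) 0 ∂μS)

/-- The effective domain of `J(·,η)`. -/
def domJ (η : ℝ) : Set Mat3 :=
  {Q : Mat3 | Sym0 Q ∧ -(1/3) < vmin Q ∧ η < mdot Q Q}

/-- The matrix `∫_{S²} (f(p)/(Qp·p − η)) (p⊗p − (1/3)I) dp` (integrand `0` where `f` vanishes,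
by the junk-value conventions of division in Lean). -/
def Mmat (f : V3 → ℝ) (Q : Mat3) (η : ℝ) : Mat3 :=
  Matrix.of fun i j =>
    ∫ p, f p / (qf Q p - η) * (p i * p j - if i = j then (1 : ℝ) / 3 else 0) ∂μS

/-- The entropy `∫_{S²} f ln f ∈ ℝ ∪ {+∞}`. -/
def EntE (f : V3 → ℝ) : EReal :=
  if Integrable (fun p => f p * Real.log (f p)) μS
  then ((∫ p, f p * Real.log (f p) ∂μS : ℝ) : EReal)
  else ⊤

/-- The Ball–Majumdar singular potential `ψ_s(Q) = inf_{f ∈ A(Q)} ∫ f ln f`. -/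
def psiS (Q : Mat3) : EReal :=
  sInf {y : EReal | ∃ f : V3 → ℝ, IsProb f ∧ Qten f = Q ∧ EntE f = y}

/-- `f` is an `L^p`-local minimiser of `F(·,η)`. -/
def LpLocMin (pp : ℝ≥0∞) (η : ℝ) (f : V3 → ℝ) : Prop :=
  FE f η < ⊤ ∧ ∃ ε : ℝ, 0 < ε ∧ ∀ g : V3 → ℝ, IsProb g →
    eLpNorm (g - f) pp μS < ENNReal.ofReal ε → FE f η ≤ FE g η


/-! ### Auxiliary lemmas -/

open scoped NNReal

section Aux

lemma coord_abs_le_dist (p q : V3) (i : Fin 3) : |p i - q i| ≤ dist p q := by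
  rw [EuclideanSpace.dist_eq]
  have h : (dist (p i) (q i))^2 ≤ ∑ j, dist (p j) (q j) ^ 2 :=
    Finset.single_le_sum (f := fun j => dist (p j) (q j)^2) (fun j _ => sq_nonneg _)
      (Finset.mem_univ i)
  calc |p i - q i| = Real.sqrt ((dist (p i) (q i))^2) := by
        rw [Real.sqrt_sq_eq_abs]; simp [Real.dist_eq]
    _ ≤ _ := Real.sqrt_le_sqrt h

lemma continuous_coord (i : Fin 3) : Continuous fun p : V3 => p i := by
  refine (LipschitzWith.of_dist_le_mul (K := 1) fun p q => ?_).continuous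
  simpa [Real.dist_eq] using coord_abs_le_dist p q i

lemma measurable_coord (i : Fin 3) : Measurable fun p : V3 => p i :=
  (continuous_coord i).measurable

lemma sph_meas : MeasurableSet sph := Metric.isClosed_sphere.measurableSet

lemma ae_sph : ∀ᵐ p ∂μS, p ∈ sph := by
  rw [μS]; exact ae_restrict_mem sph_meas

lemma norm_sph {p : V3} (hp : p ∈ sph) : ‖p‖ = 1 := by simpa [sph] using hp

lemma sum_sq_sph {p : V3} (hp : p ∈ sph) : p 0^2 + p 1^2 + p 2^2 = 1 := by
  have h := norm_sph hp
  rw [EuclideanSpace.norm_eq] at h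
  have h2 : (∑ i, p i ^ 2) = 1 := by
    have := Real.sqrt_eq_one.mp h
    simpa [Real.norm_eq_abs, sq_abs] using this
  simpa [Fin.sum_univ_three] using h2

lemma coord_sq_le_one {p : V3} (hp : p ∈ sph) (i : Fin 3) : p i ^ 2 ≤ 1 := by
  have h := sum_sq_sph hp
  have h0 := sq_nonneg (p 0); have h1 := sq_nonneg (p 1); have h2 := sq_nonneg (p 2)
  fin_cases i
  · show p 0 ^ 2 ≤ 1; linarith
  · show p 1 ^ 2 ≤ 1; linarith
  · show p 2 ^ 2 ≤ 1; linarith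

lemma abs_coord_le_one {p : V3} (hp : p ∈ sph) (i : Fin 3) : |p i| ≤ 1 := by
  nlinarith [coord_sq_le_one hp i, abs_nonneg (p i), sq_abs (p i)]

lemma dot_sq_le_one {p q : V3} (hp : p ∈ sph) (hq : q ∈ sph) :
    (∑ i, p i * q i)^2 ≤ 1 := by
  have h1 := sum_sq_sph hp; have h2 := sum_sq_sph hq
  rw [Fin.sum_univ_three]
  nlinarith [sq_nonneg (p 0 * q 1 - p 1 * q 0), sq_nonneg (p 0 * q 2 - p 2 * q 0),
    sq_nonneg (p 1 * q 2 - p 2 * q 1)]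

/-- The closed cap `{p₂ ≥ 1 − δ}` (as a subset of all of `V3`). -/
def capA (δ : ℝ) : Set V3 := {p : V3 | 1 - δ ≤ p 2}

lemma capA_meas (δ : ℝ) : MeasurableSet (capA δ) :=
  measurableSet_le measurable_const (measurable_coord 2)

lemma muS_capA (δ : ℝ) : μS (capA δ) = μH[2] (capA δ ∩ sph) := by
  rw [μS, Measure.restrict_apply (capA_meas δ)]

lemma cap_pos {δ : ℝ} (hδ : 0 < δ) (hδ1 : δ ≤ 1/4) : 0 < μS (capA δ) := by
  rw [muS_capA]
  set π : V3 → (Fin 2 → ℝ) := fun p i => p i.castSucc with hπ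
  have hlip : LipschitzWith 1 π := by
    apply LipschitzWith.of_dist_le_mul
    intro p q
    simp only [NNReal.coe_one, one_mul]
    refine dist_pi_le_iff dist_nonneg |>.2 fun i => ?_
    simpa [Real.dist_eq] using coord_abs_le_dist p q i.castSucc
  set S : Set (Fin 2 → ℝ) := Set.univ.pi fun _ => Set.Icc (-(δ/2)) (δ/2) with hS
  have hsub : S ⊆ π '' (capA δ ∩ sph) := by
    intro x hx
    have hx0 : |x 0| ≤ δ/2 := abs_le.2 (hx (Fin.mk 0 (by norm_num)) trivial)
    have hx1 : |x 1| ≤ δ/2 := abs_le.2 (hx (Fin.mk 1 (by norm_num)) trivial)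
    have hx0' := abs_le.1 hx0; have hx1' := abs_le.1 hx1
    set z : ℝ := Real.sqrt (1 - x 0^2 - x 1^2) with hz
    have hpos : (1-δ)^2 ≤ 1 - x 0^2 - x 1^2 := by nlinarith
    have h0le : (0:ℝ) ≤ 1 - x 0^2 - x 1^2 := by nlinarith
    set P : V3 := (WithLp.equiv 2 (Fin 3 → ℝ)).symm ![x 0, x 1, z] with hP
    have hP0 : P 0 = x 0 := rfl
    have hP1 : P 1 = x 1 := rfl
    have hP2 : P 2 = z := rfl
    have hPsph : P ∈ sph := by
      simp only [sph, mem_sphere_iff_norm, sub_zero]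
      rw [EuclideanSpace.norm_eq, Fin.sum_univ_three, hP0, hP1, hP2]
      simp only [Real.norm_eq_abs, sq_abs]
      rw [hz, Real.sq_sqrt h0le]
      rw [show x 0 ^ 2 + x 1 ^ 2 + (1 - x 0 ^ 2 - x 1 ^ 2) = 1 by ring, Real.sqrt_one]
    refine ⟨P, ⟨?_, hPsph⟩, ?_⟩
    · show 1 - δ ≤ P 2
      rw [hP2, hz]
      rw [show (1:ℝ) - δ = Real.sqrt ((1-δ)^2) by rw [Real.sqrt_sq (by linarith)]]
      exact Real.sqrt_le_sqrt hpos
    · funext i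
      fin_cases i <;> rfl
  have h1 : volume S ≤ μH[(2:ℝ)] (π '' (capA δ ∩ sph)) := by
    rw [← show (μH[(2:ℝ)] : Measure (Fin 2 → ℝ)) = volume by
      simpa using (hausdorffMeasure_pi_real (ι := Fin 2))]
    exact measure_mono hsub
  have h2 : μH[(2:ℝ)] (π '' (capA δ ∩ sph)) ≤ μH[(2:ℝ)] (capA δ ∩ sph) := by
    simpa using hlip.hausdorffMeasure_image_le (by norm_num : (0:ℝ) ≤ 2) (capA δ ∩ sph)
  have hvol : 0 < volume S := by
    rw [hS, volume_pi_pi]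
    rw [Real.volume_Icc]
    simp only [Finset.prod_const]
    have h3 : (0:ℝ≥0∞) < ENNReal.ofReal (δ/2 - -(δ/2)) := by
      rw [ENNReal.ofReal_pos]; linarith
    positivity
  exact hvol.trans_le (h1.trans h2)

lemma nmap_dist (v w : V3) (hv : 1 ≤ ‖v‖) (hw : 1 ≤ ‖w‖) :
    dist (‖v‖⁻¹ • v) (‖w‖⁻¹ • w) ≤ 2 * dist v w := by
  have hv0 : (0:ℝ) < ‖v‖ := lt_of_lt_of_le one_pos hv
  have hw0 : (0:ℝ) < ‖w‖ := lt_of_lt_of_le one_pos hw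
  rw [dist_eq_norm]
  have hsplit : ‖v‖⁻¹ • v - ‖w‖⁻¹ • w
      = ‖v‖⁻¹ • (v - w) + (‖v‖⁻¹ - ‖w‖⁻¹) • w := by
    rw [smul_sub, sub_smul]; abel
  rw [hsplit]
  have h1 : ‖‖v‖⁻¹ • (v - w)‖ ≤ ‖v - w‖ := by
    rw [norm_smul, Real.norm_eq_abs, abs_of_pos (inv_pos.2 hv0)]
    calc ‖v‖⁻¹ * ‖v - w‖ ≤ 1 * ‖v - w‖ := by
          apply mul_le_mul_of_nonneg_right _ (norm_nonneg _)
          exact inv_le_one_of_one_le₀ hv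
      _ = ‖v - w‖ := one_mul _
  have h2 : ‖(‖v‖⁻¹ - ‖w‖⁻¹) • w‖ ≤ ‖v - w‖ := by
    rw [norm_smul, Real.norm_eq_abs]
    have heq : ‖v‖⁻¹ - ‖w‖⁻¹ = (‖w‖ - ‖v‖) / (‖v‖ * ‖w‖) := by field_simp
    rw [heq, abs_div, abs_mul, abs_of_pos hv0, abs_of_pos hw0]
    have hb : |‖w‖ - ‖v‖| ≤ ‖v - w‖ := by
      rw [← norm_sub_rev]; exact abs_norm_sub_norm_le w v
    calc |‖w‖ - ‖v‖| / (‖v‖ * ‖w‖) * ‖w‖ = |‖w‖ - ‖v‖| / ‖v‖ := by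
          field_simp
      _ ≤ |‖w‖ - ‖v‖| / 1 := by
          apply div_le_div_of_nonneg_left (abs_nonneg _) one_pos hv
      _ = |‖w‖ - ‖v‖| := div_one _
      _ ≤ ‖v - w‖ := hb
  calc ‖‖v‖⁻¹ • (v - w) + (‖v‖⁻¹ - ‖w‖⁻¹) • w‖
      ≤ ‖‖v‖⁻¹ • (v - w)‖ + ‖(‖v‖⁻¹ - ‖w‖⁻¹) • w‖ := norm_add_le _ _
    _ ≤ ‖v - w‖ + ‖v - w‖ := add_le_add h1 h2
    _ = 2 * dist v w := by rw [dist_eq_norm]; ring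

lemma cap_finite {δ : ℝ} (hδ : 0 < δ) (hδ1 : δ ≤ 1/4) : μS (capA δ) < ⊤ := by
  rw [muS_capA]
  set T : (Fin 2 → ℝ) → V3 := fun x => (WithLp.equiv 2 (Fin 3 → ℝ)).symm ![x 0, x 1, 1] with hT
  have hT0 : ∀ x, T x 0 = x 0 := fun _ => rfl
  have hT1 : ∀ x, T x 1 = x 1 := fun _ => rfl
  have hT2 : ∀ x, T x 2 = 1 := fun _ => rfl
  have hTnorm : ∀ x, 1 ≤ ‖T x‖ := by
    intro x
    rw [EuclideanSpace.norm_eq, Fin.sum_univ_three, hT0, hT1, hT2]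
    rw [show (1:ℝ) = Real.sqrt 1 by rw [Real.sqrt_one]]
    apply Real.sqrt_le_sqrt
    simp [Real.norm_eq_abs, sq_abs]
    nlinarith [sq_nonneg (x 0), sq_nonneg (x 1), Real.sqrt_one]
  have hTlip : LipschitzWith 2 T := by
    apply LipschitzWith.of_dist_le_mul
    intro x y
    simp only [NNReal.coe_ofNat]
    rw [EuclideanSpace.dist_eq, Fin.sum_univ_three]
    simp only [hT0, hT1, hT2]
    have d0 : dist (x 0) (y 0) ≤ dist x y := dist_le_pi_dist x y 0
    have d1 : dist (x 1) (y 1) ≤ dist x y := dist_le_pi_dist x y 1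
    have hd : (0:ℝ) ≤ dist x y := dist_nonneg
    have hb : dist (x 0) (y 0) ^ 2 + dist (x 1) (y 1) ^ 2 + dist (1:ℝ) 1 ^ 2
        ≤ (2 * dist x y)^2 := by
      simp only [dist_self]
      nlinarith [dist_nonneg (x := x 0) (y := y 0), dist_nonneg (x := x 1) (y := y 1)]
    calc Real.sqrt (dist (x 0) (y 0) ^ 2 + dist (x 1) (y 1) ^ 2 + dist (1:ℝ) 1 ^ 2)
        ≤ Real.sqrt ((2 * dist x y)^2) := Real.sqrt_le_sqrt hb
      _ = 2 * dist x y := Real.sqrt_sq (by linarith)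
  set N : V3 → V3 := fun v => ‖v‖⁻¹ • v with hN
  set Φ : (Fin 2 → ℝ) → V3 := N ∘ T with hΦ
  set Q : Set (Fin 2 → ℝ) := Set.univ.pi fun _ => Set.Icc (-2:ℝ) 2 with hQ
  have hΦlip : LipschitzOnWith (2 * 2) Φ Q := by
    have hNlip : LipschitzOnWith 2 N {v : V3 | 1 ≤ ‖v‖} := by
      rw [lipschitzOnWith_iff_dist_le_mul]
      intro v hv w hw
      exact_mod_cast nmap_dist v w hv hw
    exact hNlip.comp hTlip.lipschitzOnWith (fun x _ => hTnorm x)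
  have hsub : capA δ ∩ sph ⊆ Φ '' Q := by
    rintro p ⟨hpA, hpsph⟩
    have hss := sum_sq_sph hpsph
    have hp2 : (3:ℝ)/4 ≤ p 2 := by
      have h4 : (1:ℝ) - δ ≤ p 2 := hpA
      linarith
    have hp2pos : (0:ℝ) < p 2 := by linarith
    have habs0 : |p 0 / p 2| ≤ 2 := by
      rw [abs_div, abs_of_pos hp2pos, div_le_iff₀ hp2pos]
      have h1 : |p 0| ≤ 1 := by nlinarith [abs_nonneg (p 0), sq_abs (p 0)]
      linarith
    have habs1 : |p 1 / p 2| ≤ 2 := by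
      rw [abs_div, abs_of_pos hp2pos, div_le_iff₀ hp2pos]
      have h1 : |p 1| ≤ 1 := by nlinarith [abs_nonneg (p 1), sq_abs (p 1)]
      linarith
    set x : Fin 2 → ℝ := ![p 0 / p 2, p 1 / p 2] with hx
    have hxQ : x ∈ Q := by
      intro i _
      fin_cases i
      · exact abs_le.1 (by simpa [hx] using habs0)
      · exact abs_le.1 (by simpa [hx] using habs1)
    refine ⟨x, hxQ, ?_⟩
    have hTx : T x = (p 2)⁻¹ • p := by
      ext i
      fin_cases i
      · show x 0 = (p 2)⁻¹ * p 0
        simp [hx]; field_simp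
      · show x 1 = (p 2)⁻¹ * p 1
        simp [hx]; field_simp
      · show (1:ℝ) = (p 2)⁻¹ * p 2
        field_simp
    show N (T x) = p
    rw [hTx, hN]
    have hnorm : ‖(p 2)⁻¹ • p‖ = (p 2)⁻¹ := by
      rw [norm_smul, Real.norm_eq_abs, abs_of_pos (inv_pos.2 hp2pos), norm_sph hpsph, mul_one]
    simp only [hnorm, inv_inv, smul_smul]
    rw [mul_inv_cancel₀ (ne_of_gt hp2pos), one_smul]
  calc μH[(2:ℝ)] (capA δ ∩ sph) ≤ μH[(2:ℝ)] (Φ '' Q) := measure_mono hsub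
    _ ≤ ((2*2 : ℝ≥0) : ℝ≥0∞) ^ (2:ℝ) * μH[(2:ℝ)] Q :=
        hΦlip.hausdorffMeasure_image_le (by norm_num)
    _ < ⊤ := by
        apply ENNReal.mul_lt_top
        · exact ENNReal.rpow_lt_top_of_nonneg (by norm_num) ENNReal.coe_ne_top
        · rw [show (μH[(2:ℝ)] : Measure (Fin 2 → ℝ)) = volume by
            simpa using (hausdorffMeasure_pi_real (ι := Fin 2))]
          rw [hQ, volume_pi_pi, Real.volume_Icc]
          exact ENNReal.prod_lt_top (fun i _ => ENNReal.ofReal_lt_top)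

lemma Kf_le_23 (f : V3 → ℝ) (hint : Integrable f μS) (hf0 : ∀ᵐ q ∂μS, 0 ≤ f q)
    (hI : ∫ q, f q ∂μS = 1) {p : V3} (hp : p ∈ sph) : Kf f p ≤ 2/3 := by
  rw [Kf]
  by_cases hg : Integrable (fun q => ((∑ i, p i * q i)^2 - 1/3) * f q) μS
  · have hle : ∀ᵐ q ∂μS, ((∑ i, p i * q i)^2 - 1/3) * f q ≤ (2/3) * f q := by
      filter_upwards [hf0, ae_sph] with q h0 hq
      have h1 := dot_sq_le_one hp hq
      nlinarith
    calc ∫ q, ((∑ i, p i * q i)^2 - 1/3) * f q ∂μS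
        ≤ ∫ q, (2/3) * f q ∂μS := integral_mono_ae hg (hint.const_mul _) hle
      _ = 2/3 := by rw [integral_const_mul, hI, mul_one]
  · rw [integral_undef hg]; norm_num

lemma int_coord_mul (f : V3 → ℝ) (hint : Integrable f μS) (i j : Fin 3) :
    Integrable (fun q : V3 => q i * q j * f q) μS := by
  refine hint.abs.mono'
    (((measurable_coord i).mul (measurable_coord j)).aestronglyMeasurable.mul
      hint.aestronglyMeasurable) ?_
  filter_upwards [ae_sph] with q hq
  have hi := abs_coord_le_one hq i
  have hj := abs_coord_le_one hq j
  simp only [Real.norm_eq_abs, abs_mul]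
  have h0i := abs_nonneg (q i); have h0j := abs_nonneg (q j); have h0f := abs_nonneg (f q)
  have hij : |q i| * |q j| ≤ 1 := by nlinarith
  calc |q i| * |q j| * |f q| ≤ 1 * |f q| := mul_le_mul_of_nonneg_right hij h0f
    _ = |f q| := one_mul _

lemma Kf_eq (f : V3 → ℝ) (hint : Integrable f μS) :
    Kf f = fun p => (∑ i, ∑ j, p i * p j * ∫ q, q i * q j * f q ∂μS)
      - (1/3) * ∫ q, f q ∂μS := by
  funext p
  rw [Kf]
  have step : ∀ q : V3, ((∑ i, p i * q i)^2 - 1/3) * f q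
      = (∑ i, ∑ j, p i * p j * (q i * q j * f q)) - (1/3) * f q := by
    intro q
    simp only [Fin.sum_univ_three]
    ring
  simp only [step]
  have hsum : Integrable (fun q : V3 => ∑ i, ∑ j, p i * p j * (q i * q j * f q)) μS :=
    integrable_finset_sum _ (fun i _ => integrable_finset_sum _
      (fun j _ => (int_coord_mul f hint i j).const_mul _))
  rw [integral_sub hsum (hint.const_mul _), integral_const_mul]
  congr 1
  rw [integral_finset_sum _ (fun i _ => integrable_finset_sum _
    (fun j _ => (int_coord_mul f hint i j).const_mul _))]
  refine Finset.sum_congr rfl fun i _ => ?_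
  rw [integral_finset_sum _ (fun j _ => (int_coord_mul f hint i j).const_mul _)]
  refine Finset.sum_congr rfl fun j _ => ?_
  rw [integral_const_mul]

lemma Kf_meas (f : V3 → ℝ) (hint : Integrable f μS) : Measurable (Kf f) := by
  rw [Kf_eq f hint]
  apply Measurable.sub _ measurable_const
  exact Finset.measurable_sum _ (fun i _ => Finset.measurable_sum _
    (fun j _ => ((measurable_coord i).mul (measurable_coord j)).mul_const _))

set_option maxHeartbeats 1000000 in
lemma cap_dot {δ : ℝ} (hδ : 0 < δ) (hδ1 : δ ≤ 1/4) {p q : V3}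
    (hp : p ∈ capA δ) (hq : q ∈ capA δ) (hps : p ∈ sph) (hqs : q ∈ sph) :
    1 - 8*δ ≤ (∑ i, p i * q i)^2 := by
  have h1 := sum_sq_sph hps; have h2 := sum_sq_sph hqs
  have hp2 : 1 - δ ≤ p 2 := hp
  have hq2 : 1 - δ ≤ q 2 := hq
  rw [Fin.sum_univ_three]
  have hp2le : p 2 ≤ 1 := by nlinarith [sq_nonneg (p 0), sq_nonneg (p 1), sq_nonneg (p 2 - 1)]
  have hq2le : q 2 ≤ 1 := by nlinarith [sq_nonneg (q 0), sq_nonneg (q 1), sq_nonneg (q 2 - 1)]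
  have hs : (p 0 * q 0 + p 1 * q 1)^2 ≤ (1 - p 2^2) * (1 - q 2^2) := by
    nlinarith [sq_nonneg (p 0 * q 1 - p 1 * q 0)]
  have hA : 1 - p 2^2 ≤ 2*δ := by nlinarith
  have hB : 1 - q 2^2 ≤ 2*δ := by nlinarith
  have hApos : 0 ≤ 1 - p 2^2 := by nlinarith [sq_nonneg (p 0), sq_nonneg (p 1)]
  have hs2 : (p 0 * q 0 + p 1 * q 1)^2 ≤ (2*δ)^2 := by
    calc (p 0 * q 0 + p 1 * q 1)^2 ≤ (1 - p 2^2) * (1 - q 2^2) := hs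
      _ ≤ (2*δ)^2 := by nlinarith
  have hslow : -(2*δ) ≤ p 0 * q 0 + p 1 * q 1 := by
    nlinarith [sq_nonneg (p 0 * q 0 + p 1 * q 1 + 2*δ)]
  have hp2q2 : (1-δ)^2 ≤ p 2 * q 2 := by nlinarith
  have hd : 1 - 4*δ ≤ p 0*q 0 + p 1*q 1 + p 2*q 2 := by nlinarith
  have h14 : (0:ℝ) ≤ 1 - 4*δ := by linarith
  have hsq : (1-4*δ)^2 ≤ (p 0*q 0 + p 1*q 1 + p 2*q 2)^2 := pow_le_pow_left₀ h14 hd 2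
  nlinarith [sq_nonneg δ]

end Aux

/-- there exists `f ∈ P(S²)` with `F(f,η) < +∞` iff `η < 2/3`. -/
theorem stmt_0 (η : ℝ) :
    (∃ f : V3 → ℝ, IsProb f ∧ FE f η < ⊤) ↔ η < 2/3 := by
  constructor
  · rintro ⟨f, ⟨hint, hf0, hI⟩, hFE⟩
    by_contra hη
    push_neg at hη
    have hcond : ∀ᵐ p ∂μS, f p ≠ 0 → η < Kf f p := by
      by_cases h : (∀ᵐ p ∂μS, f p ≠ 0 → η < Kf f p) ∧
          Integrable (fun p => f p * Real.log (f p) - f p * Real.log (Kf f p - η)) μS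
      · exact h.1
      · rw [FE, if_neg h] at hFE
        exact absurd hFE (lt_irrefl _)
    have hzero : ∀ᵐ p ∂μS, f p = 0 := by
      filter_upwards [hcond, ae_sph, hf0] with p h1 h2 _
      by_contra hne
      have h3 := h1 hne
      have h4 := Kf_le_23 f hint hf0 hI h2
      linarith
    have h5 : ∫ p, f p ∂μS = 0 := integral_eq_zero_of_ae hzero
    rw [hI] at h5
    norm_num at h5
  · intro hη
    set ε : ℝ := 2/3 - η with hε
    have hεpos : 0 < ε := by rw [hε]; linarith
    set δ : ℝ := min (1/4) (ε/16) with hδdef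
    have hδpos : 0 < δ := lt_min (by norm_num) (by positivity)
    have hδ14 : δ ≤ 1/4 := min_le_left _ _
    have hδε : δ ≤ ε/16 := min_le_right _ _
    set A : Set V3 := capA δ with hA
    have hAm : MeasurableSet A := capA_meas δ
    have hpos := cap_pos hδpos hδ14
    have hfin := cap_finite hδpos hδ14
    set m : ℝ := (μS A).toReal with hm
    have hmpos : 0 < m := ENNReal.toReal_pos hpos.ne' hfin.ne
    set c : ℝ := m⁻¹ with hc
    have hcpos : 0 < c := inv_pos.2 hmpos
    set f : V3 → ℝ := A.indicator (fun _ => c) with hf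
    have hfm : Measurable f := measurable_const.indicator hAm
    have hint : Integrable f μS := by
      rw [hf, integrable_indicator_iff hAm]
      exact integrableOn_const hfin.ne
    have hf0 : ∀ᵐ p ∂μS, 0 ≤ f p :=
      ae_of_all _ (fun p => Set.indicator_nonneg (fun _ _ => hcpos.le) p)
    have hI : ∫ p, f p ∂μS = 1 := by
      rw [hf, integral_indicator_const _ hAm, smul_eq_mul, measureReal_def, ← hm, hc]
      field_simp
    have hfval : ∀ p ∈ A, f p = c := fun p hp => by rw [hf, Set.indicator_of_mem hp]
    have hfval' : ∀ p, p ∉ A → f p = 0 := fun p hp => by rw [hf, Set.indicator_of_notMem hp]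
    haveI : IsFiniteMeasure (μS.restrict A) := ⟨by rwa [Measure.restrict_apply_univ]⟩
    have hKlow : ∀ p ∈ A, p ∈ sph → 2/3 - 8*δ ≤ Kf f p := by
      intro p hpA hpsph
      have hrepr : Kf f p = ∫ q in A, ((∑ i, p i * q i)^2 - 1/3) * c ∂μS := by
        rw [Kf, ← integral_indicator hAm]
        congr 1
        funext q
        by_cases hq : q ∈ A
        · rw [Set.indicator_of_mem hq, hfval q hq]
        · rw [Set.indicator_of_notMem hq, hfval' q hq, mul_zero]
      have hmeas : Measurable fun q : V3 => ((∑ i, p i * q i)^2 - 1/3) * c :=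
        (((Finset.measurable_sum _ (fun i _ => (measurable_coord i).const_mul _)).pow_const 2).sub
          measurable_const).mul_const _
      have hgint : Integrable (fun q : V3 => ((∑ i, p i * q i)^2 - 1/3) * c) (μS.restrict A) := by
        refine (integrable_const ((4/3)*c)).mono' hmeas.aestronglyMeasurable ?_
        filter_upwards [ae_restrict_of_ae ae_sph] with q hq
        have h1 := dot_sq_le_one hpsph hq
        have h2 := sq_nonneg (∑ i, p i * q i)
        rw [Real.norm_eq_abs, abs_mul, abs_of_pos hcpos]
        have h3 : |(∑ i, p i * q i)^2 - 1/3| ≤ 4/3 := by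
          rw [abs_le]; constructor <;> nlinarith
        nlinarith
      have hle : ∀ᵐ q ∂(μS.restrict A),
          (2/3 - 8*δ) * c ≤ ((∑ i, p i * q i)^2 - 1/3) * c := by
        filter_upwards [ae_restrict_of_ae ae_sph, ae_restrict_mem hAm] with q hq hqA
        have h4 := cap_dot hδpos hδ14 hpA hqA hpsph hq
        nlinarith
      have h6 : ∫ q in A, (2/3 - 8*δ) * c ∂μS ≤ ∫ q in A, ((∑ i, p i * q i)^2 - 1/3) * c ∂μS :=
        integral_mono_ae (integrable_const _) hgint hle
      rw [integral_const, measureReal_def, Measure.restrict_apply_univ, ← hm, smul_eq_mul] at h6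
      rw [hrepr]
      calc 2/3 - 8*δ = m * ((2/3-8*δ) * c) := by rw [hc]; field_simp
        _ ≤ _ := h6
    have h8δ : 8*δ ≤ ε/2 := by linarith
    have hηlt : η < 2/3 - 8*δ := by rw [hε] at h8δ; linarith
    have hKlow' : ∀ p ∈ A, p ∈ sph → η < Kf f p := by
      intro p hpA hpsph
      have h7 := hKlow p hpA hpsph
      linarith
    have hcond : ∀ᵐ p ∂μS, f p ≠ 0 → η < Kf f p := by
      filter_upwards [ae_sph] with p hpsph hne
      have hpA : p ∈ A := by
        by_contra hpA
        exact hne (hfval' p hpA)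
      exact hKlow' p hpA hpsph
    set lo : ℝ := 2/3 - 8*δ - η with hlo
    have hlopos : 0 < lo := by rw [hlo]; linarith
    set B : ℝ := |c * Real.log c| + c * (|Real.log lo| + |Real.log (2/3 - η)|) with hB
    have hKhi : ∀ p ∈ sph, Kf f p ≤ 2/3 := fun p hp => Kf_le_23 f hint hf0 hI hp
    set G : V3 → ℝ := fun p => f p * Real.log (f p) - f p * Real.log (Kf f p - η) with hG
    have hGm : Measurable G :=
      (hfm.mul (Real.measurable_log.comp hfm)).sub
        (hfm.mul (Real.measurable_log.comp ((Kf_meas f hint).sub measurable_const)))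
    have hGbound : ∀ᵐ p ∂μS, ‖G p‖ ≤ A.indicator (fun _ => B) p := by
      filter_upwards [ae_sph] with p hpsph
      by_cases hpA : p ∈ A
      · rw [Set.indicator_of_mem hpA]
        have hfp := hfval p hpA
        have h1 : lo ≤ Kf f p - η := by
          have h9 := hKlow p hpA hpsph; rw [hlo]; linarith
        have h2 : Kf f p - η ≤ 2/3 - η := by
          have h9 := hKhi p hpsph; linarith
        have hlog1 : Real.log lo ≤ Real.log (Kf f p - η) := Real.log_le_log hlopos h1
        have hlog2 : Real.log (Kf f p - η) ≤ Real.log (2/3 - η) :=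
          Real.log_le_log (by linarith) h2
        have habs : |Real.log (Kf f p - η)| ≤ |Real.log lo| + |Real.log (2/3-η)| := by
          rw [abs_le]; constructor
          · have h10 := neg_abs_le (Real.log lo)
            have h11 := abs_nonneg (Real.log (2/3-η))
            linarith
          · have h10 := le_abs_self (Real.log (2/3-η))
            have h11 := abs_nonneg (Real.log lo)
            linarith
        show ‖G p‖ ≤ B
        rw [hG]
        simp only [hfp]
        rw [Real.norm_eq_abs]
        calc |c * Real.log c - c * Real.log (Kf f p - η)|
            ≤ |c * Real.log c| + |c * Real.log (Kf f p - η)| := abs_sub _ _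
          _ = |c * Real.log c| + c * |Real.log (Kf f p - η)| := by
              rw [abs_mul c (Real.log (Kf f p - η)), abs_of_pos hcpos]
          _ ≤ B := by
              rw [hB]
              have h12 := mul_le_mul_of_nonneg_left habs hcpos.le
              linarith
      · rw [Set.indicator_of_notMem hpA]
        show ‖G p‖ ≤ 0
        rw [hG]
        simp [hfval' p hpA]
    have hGint : Integrable G μS := by
      refine Integrable.mono' ?_ hGm.aestronglyMeasurable hGbound
      rw [integrable_indicator_iff hAm]
      exact integrableOn_const hfin.ne
    refine ⟨f, ⟨hint, hf0, hI⟩, ?_⟩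
    rw [FE, if_pos ⟨hcond, hGint⟩]
    exact EReal.coe_lt_top _
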